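/- arXiv:1302.0522 — 3 statements merged into one kernel-verified Lean document; each statement's English description precedes it below -/
import Mathlib

section
/- Fix a positive integer j, a finite index set I_c = {1,…,n_c}, and for each t ∈ I_c a real polynomial A^{(t)}(x) = 1 + ∑_{u=r_t}^{s_t} A_u^{(t)} x^u with nonnegative coefficients A_u^{(t)} ≥ 0 and r_t ≥ 2, together with constants γ_t ≥ 0. Let (n_t(m))_{m∈ℕ} be natural-number sequences with n_t(m)/m → γ_t as m → ∞ (e.g. n_t(m) = γ_t·m along a suitable subsequence). Then lim_{m→∞} Coef[∏_{t∈I_c} (A^{(t)}(x))^{n_t(m)}, x^{2j}] / m^j = (1/j!)·(∑_{t : r_t = 2} γ_t A_2^{(t)})^j, where Coef[f(x), x^i] denotes the coefficient of x^i in the polynomial f(x). Equivalently, writing E = m/∫ρ, γ_t = ρ_t/(s_t∫ρ) and C = 2∑_{t : r_t = 2} ρ_t A_2^{(t)}/s_t, the coefficient of x^{2j} in ∏_t (A^{(t)}(x))^{γ_t m} converges to (EC/2)^j/j! as m → ∞. -/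
open Filter

open Polynomial Asymptotics

lemma aux_pow_coeff_zero (B : Polynomial ℝ) (h0 : B.coeff 0 = 0) (h1 : B.coeff 1 = 0) :
    ∀ i k, k < 2 * i → (B ^ i).coeff k = 0 := by
  intro i
  induction i with
  | zero => intro k hk; omega
  | succ i ih =>
    intro k hk
    rw [pow_succ, mul_comm, Polynomial.coeff_mul]
    apply Finset.sum_eq_zero
    rintro ⟨a, b⟩ hab
    rw [Finset.HasAntidiagonal.mem_antidiagonal] at hab
    rcases Nat.lt_or_ge a 2 with h | h
    · interval_cases a <;> simp [h0, h1]
    · have hb : b < 2 * i := by omega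
      simp [ih b hb]

lemma aux_pow_coeff_top (B : Polynomial ℝ) (h0 : B.coeff 0 = 0) (h1 : B.coeff 1 = 0) :
    ∀ i, (B ^ i).coeff (2 * i) = (B.coeff 2) ^ i := by
  intro i
  induction i with
  | zero => simp
  | succ i ih =>
    rw [pow_succ, mul_comm, Polynomial.coeff_mul]
    rw [Finset.sum_eq_single (2, 2 * i)]
    · rw [ih]; ring
    · rintro ⟨a, b⟩ hab hne
      rw [Finset.HasAntidiagonal.mem_antidiagonal] at hab
      rcases Nat.lt_or_ge a 2 with h | h
      · interval_cases a <;> simp [h0, h1]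
      · rcases Nat.lt_or_ge b (2 * i) with hb | hb
        · simp [aux_pow_coeff_zero B h0 h1 i b hb]
        · exfalso; apply hne
          have : a = 2 := by omega
          have : b = 2 * i := by omega
          simp_all
    · intro h
      exact absurd (Finset.HasAntidiagonal.mem_antidiagonal.2 (by omega)) h

lemma aux_coeff_pow_sum (A : Polynomial ℝ) (hA0 : A.coeff 0 = 1) (hA1 : A.coeff 1 = 0)
    (n k : ℕ) :
    (A ^ n).coeff k = ∑ i ∈ Finset.range (k / 2 + 1),
      (n.choose i : ℝ) * ((A - 1) ^ i).coeff k := by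
  set B := A - 1 with hB
  have h0 : B.coeff 0 = 0 := by simp [hB, hA0]
  have h1 : B.coeff 1 = 0 := by simp [hB, Polynomial.coeff_sub, hA1, Polynomial.coeff_one]
  have hA : A = B + 1 := by rw [hB]; ring
  rw [hA, add_pow]
  rw [Polynomial.finset_sum_coeff]
  have key : ∀ i : ℕ, (B ^ i * 1 ^ (n - i) * (n.choose i : Polynomial ℝ)).coeff k
      = (n.choose i : ℝ) * (B ^ i).coeff k := by
    intro i
    simp [mul_comm]
  simp only [key]
  calc ∑ i ∈ Finset.range (n + 1), (n.choose i : ℝ) * (B ^ i).coeff k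
      = ∑ i ∈ Finset.range (max (n + 1) (k / 2 + 1)), (n.choose i : ℝ) * (B ^ i).coeff k := by
        apply Finset.sum_subset (Finset.range_subset_range.2 (le_max_left _ _))
        intro i hi hi2
        have : n < i := by simp only [Finset.mem_range] at hi2; omega
        simp [Nat.choose_eq_zero_of_lt this]
    _ = ∑ i ∈ Finset.range (k / 2 + 1), (n.choose i : ℝ) * (B ^ i).coeff k := by
        symm
        apply Finset.sum_subset (Finset.range_subset_range.2 (le_max_right _ _))
        intro i hi hi2
        have : k < 2 * i := by simp only [Finset.mem_range] at hi2; omega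
        simp [aux_pow_coeff_zero B h0 h1 i k this]

lemma aux_pow_isBigO {a b : ℕ} (h : a ≤ b) :
    (fun m : ℕ => (m:ℝ) ^ a) =O[atTop] (fun m : ℕ => (m:ℝ) ^ b) := by
  apply IsBigO.of_bound 1
  filter_upwards [eventually_ge_atTop 1] with m hm
  have hm1 : (1:ℝ) ≤ (m:ℝ) := by exact_mod_cast hm
  rw [one_mul, Real.norm_eq_abs, Real.norm_eq_abs, abs_of_nonneg (by positivity),
    abs_of_nonneg (by positivity)]
  exact pow_le_pow_right₀ hm1 h

lemma aux_tendsto_pow_div : ∀ {a b : ℕ}, a < b →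
    Tendsto (fun m : ℕ => (m:ℝ) ^ a / (m:ℝ) ^ b) atTop (nhds 0) := by
  intro a b hab
  have : Tendsto (fun m : ℕ => ((m:ℝ) ^ (b - a))⁻¹) atTop (nhds 0) := by
    apply Tendsto.comp tendsto_inv_atTop_zero
    exact (tendsto_pow_atTop (by omega)).comp tendsto_natCast_atTop_atTop
  apply this.congr'
  filter_upwards [eventually_ge_atTop 1] with m hm
  have hm0 : (m:ℝ) ≠ 0 := by positivity
  field_simp
  rw [← pow_add]
  congr 1
  omega

lemma aux_isBigO_tendsto_zero {f : ℕ → ℝ} {a b : ℕ}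
    (h : f =O[atTop] fun m : ℕ => (m:ℝ) ^ a) (hab : a < b) :
    Tendsto (fun m => f m / (m:ℝ) ^ b) atTop (nhds 0) := by
  have h2 : (fun m => f m / (m:ℝ) ^ b) =O[atTop] fun m : ℕ => (m:ℝ) ^ a / (m:ℝ) ^ b := by
    exact h.mul (isBigO_refl (fun m : ℕ => ((m:ℝ) ^ b)⁻¹) atTop)
  exact h2.trans_tendsto (aux_tendsto_pow_div hab)

lemma aux_n_isBigO {n : ℕ → ℕ} {γ : ℝ}
    (hn : Tendsto (fun m : ℕ => (n m : ℝ) / m) atTop (nhds γ)) :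
    (fun m : ℕ => (n m : ℝ)) =O[atTop] (fun m : ℕ => (m:ℝ)) := by
  have h1 : (fun m : ℕ => (n m : ℝ) / m) =O[atTop] (fun _ : ℕ => (1:ℝ)) := hn.isBigO_one ℝ
  have h2 := h1.mul (isBigO_refl (fun m : ℕ => (m:ℝ)) atTop)
  apply IsBigO.congr' h2 ?_ (by filter_upwards with m; simp)
  filter_upwards [eventually_ge_atTop 1] with m hm
  have : (m:ℝ) ≠ 0 := by positivity
  field_simp

lemma aux_choose_isBigO {n : ℕ → ℕ} {γ : ℝ}
    (hn : Tendsto (fun m : ℕ => (n m : ℝ) / m) atTop (nhds γ)) (i : ℕ) :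
    (fun m : ℕ => ((n m).choose i : ℝ)) =O[atTop] (fun m : ℕ => (m:ℝ) ^ i) := by
  have hb : ∀ m, ‖((n m).choose i : ℝ)‖ ≤ ‖((n m : ℝ)) ^ i‖ := by
    intro m
    rw [Real.norm_eq_abs, Real.norm_eq_abs, abs_of_nonneg (by positivity),
      abs_of_nonneg (by positivity)]
    have h1 : (n m).choose i ≤ (n m) ^ i := by
      calc (n m).choose i ≤ (n m).descFactorial i := Nat.choose_le_descFactorial _ _
        _ ≤ (n m) ^ i := Nat.descFactorial_le_pow _ _
    exact_mod_cast h1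
  exact (isBigO_of_le atTop hb).trans ((aux_n_isBigO hn).pow i)

lemma aux_choose_tendsto {n : ℕ → ℕ} {γ : ℝ}
    (hn : Tendsto (fun m : ℕ => (n m : ℝ) / m) atTop (nhds γ)) (k : ℕ) :
    Tendsto (fun m : ℕ => ((n m).choose k : ℝ) / (m:ℝ) ^ k) atTop
      (nhds (γ ^ k / k.factorial)) := by
  have hdesc : Tendsto (fun m : ℕ => ((n m).descFactorial k : ℝ) / (m:ℝ) ^ k) atTop
      (nhds (γ ^ k)) := by
    have heq : ∀ᶠ m : ℕ in atTop, ((n m).descFactorial k : ℝ) / (m:ℝ) ^ k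
        = ∏ i ∈ Finset.range k, ((n m - i : ℕ) : ℝ) / (m:ℝ) := by
      filter_upwards [eventually_ge_atTop 1] with m hm
      rw [Nat.descFactorial_eq_prod_range, Nat.cast_prod, Finset.prod_div_distrib,
        Finset.prod_const, Finset.card_range]
    rw [show (γ ^ k) = ∏ _i ∈ Finset.range k, γ by simp]
    apply Tendsto.congr' (heq.mono fun m h => h.symm)
    apply tendsto_finset_prod
    intro i _
    have hi : Tendsto (fun m : ℕ => ((n m : ℝ) - ((n m - i : ℕ):ℝ)) / m) atTop (nhds 0) := by
      apply squeeze_zero' (g := fun m : ℕ => (i:ℝ) / m)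
      · filter_upwards [eventually_ge_atTop 1] with m hm
        have h1 : ((n m - i : ℕ):ℝ) ≤ (n m : ℝ) := by exact_mod_cast Nat.sub_le _ _
        have hm0 : (0:ℝ) ≤ (m:ℝ) := by positivity
        apply div_nonneg (by linarith) hm0
      · filter_upwards [eventually_ge_atTop 1] with m hm
        have hm0 : (0:ℝ) < (m:ℝ) := by exact_mod_cast Nat.lt_of_lt_of_le Nat.zero_lt_one hm
        have hh : (n m : ℝ) - ((n m - i : ℕ):ℝ) ≤ (i:ℝ) := by
          rcases le_or_gt i (n m) with h | h
          · rw [Nat.cast_sub h]; linarith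
          · have h2 : n m - i = 0 := by omega
            have h3 : (n m : ℝ) ≤ (i:ℝ) := by exact_mod_cast h.le
            rw [h2]; push_cast; linarith
        gcongr
      · exact Tendsto.div_atTop tendsto_const_nhds tendsto_natCast_atTop_atTop
    have := hn.sub hi
    rw [sub_zero] at this
    apply this.congr
    intro m
    rw [div_sub_div_same]
    ring_nf
  have : Tendsto (fun m : ℕ => (((n m).descFactorial k : ℝ) / (m:ℝ) ^ k) / (k.factorial : ℝ))
      atTop (nhds (γ ^ k / k.factorial)) := hdesc.div_const _
  apply this.congr
  intro m
  rw [Nat.descFactorial_eq_factorial_mul_choose]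
  have hf : (k.factorial : ℝ) ≠ 0 := by positivity
  push_cast
  rw [div_right_comm, mul_div_cancel_left₀ _ hf]
def Gprop (P : ℕ → Polynomial ℝ) (c : ℝ) : Prop :=
  (∀ i, (fun m => (P m).coeff i) =O[atTop] (fun m : ℕ => (m:ℝ) ^ (i / 2))) ∧
  (∀ k, Tendsto (fun m => (P m).coeff (2 * k) / (m:ℝ) ^ k) atTop (nhds (c ^ k / k.factorial)))

lemma G_one : Gprop (fun _ => 1) 0 := by
  constructor
  · intro i
    apply IsBigO.of_bound 1
    filter_upwards [eventually_ge_atTop 1] with m hm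
    have hm1 : (1:ℝ) ≤ (m:ℝ) := by exact_mod_cast hm
    rw [one_mul, Polynomial.coeff_one]
    rcases eq_or_ne i 0 with h | h
    · subst h
      simp
    · rw [if_neg h, norm_zero]
      positivity
  · intro k
    cases k with
    | zero => simpa using tendsto_const_nhds
    | succ k =>
      have : ∀ m : ℕ, ((1 : Polynomial ℝ).coeff (2 * (k+1))) / (m:ℝ) ^ (k+1) = 0 := by
        intro m
        rw [Polynomial.coeff_one]
        simp
      rw [show ((0:ℝ) ^ (k+1) / (k+1).factorial) = 0 by simp]
      simpa [this] using tendsto_const_nhds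

lemma G_base (A : Polynomial ℝ) (hA0 : A.coeff 0 = 1) (hA1 : A.coeff 1 = 0)
    (γ : ℝ) (n : ℕ → ℕ)
    (hn : Tendsto (fun m : ℕ => (n m : ℝ) / m) atTop (nhds γ)) :
    Gprop (fun m => A ^ n m) (γ * A.coeff 2) := by
  have h0 : (A - 1).coeff 0 = 0 := by simp [hA0]
  have h1 : (A - 1).coeff 1 = 0 := by
    simp [Polynomial.coeff_sub, hA1, Polynomial.coeff_one]
  constructor
  · intro i
    have heq : ∀ m, (A ^ n m).coeff i
        = ∑ l ∈ Finset.range (i / 2 + 1), ((n m).choose l : ℝ) * ((A - 1) ^ l).coeff i :=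
      fun m => aux_coeff_pow_sum A hA0 hA1 (n m) i
    simp only [heq]
    apply Asymptotics.IsBigO.fun_sum
    intro l hl
    have hli : l ≤ i / 2 := by simp only [Finset.mem_range] at hl; omega
    have h2 : (fun m => ((n m).choose l : ℝ) * ((A - 1) ^ l).coeff i)
        =O[atTop] (fun m : ℕ => (m:ℝ) ^ l * 1) :=
      (aux_choose_isBigO hn l).mul (isBigO_const_const _ one_ne_zero _)
    simp only [mul_one] at h2
    exact h2.trans (aux_pow_isBigO hli)
  · intro k
    have heq : ∀ m, (A ^ n m).coeff (2 * k) / (m:ℝ) ^ k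
        = ∑ l ∈ Finset.range (k + 1),
            ((n m).choose l : ℝ) * ((A - 1) ^ l).coeff (2 * k) / (m:ℝ) ^ k := by
      intro m
      rw [aux_coeff_pow_sum A hA0 hA1 (n m) (2 * k)]
      rw [show (2 * k) / 2 = k by omega, Finset.sum_div]
    simp only [heq]
    have hsplit : ∀ m : ℕ, (∑ l ∈ Finset.range (k + 1),
          ((n m).choose l : ℝ) * ((A - 1) ^ l).coeff (2 * k) / (m:ℝ) ^ k)
        = (∑ l ∈ Finset.range k,
            ((n m).choose l : ℝ) * ((A - 1) ^ l).coeff (2 * k) / (m:ℝ) ^ k)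
          + ((n m).choose k : ℝ) * ((A - 1) ^ k).coeff (2 * k) / (m:ℝ) ^ k := by
      intro m
      rw [Finset.sum_range_succ]
    simp only [hsplit]
    have hmain : Tendsto (fun m : ℕ =>
        ((n m).choose k : ℝ) * ((A - 1) ^ k).coeff (2 * k) / (m:ℝ) ^ k) atTop
        (nhds ((γ * A.coeff 2) ^ k / k.factorial)) := by
      have hcoef : ((A - 1) ^ k).coeff (2 * k) = (A.coeff 2) ^ k := by
        rw [aux_pow_coeff_top (A - 1) h0 h1 k]
        congr 1
        simp [Polynomial.coeff_sub, Polynomial.coeff_one]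
      simp only [hcoef]
      have := (aux_choose_tendsto hn k).mul_const ((A.coeff 2) ^ k)
      have heq2 : ∀ m : ℕ, ((n m).choose k : ℝ) / (m:ℝ) ^ k * (A.coeff 2) ^ k
          = ((n m).choose k : ℝ) * (A.coeff 2) ^ k / (m:ℝ) ^ k := by intro m; ring
      simp only [heq2] at this
      convert this using 2
      ring
    have hrest : Tendsto (fun m : ℕ => ∑ l ∈ Finset.range k,
        ((n m).choose l : ℝ) * ((A - 1) ^ l).coeff (2 * k) / (m:ℝ) ^ k) atTop (nhds 0) := by
      rw [show (0:ℝ) = ∑ l ∈ Finset.range k, (0:ℝ) by simp]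
      apply tendsto_finset_sum
      intro l hl
      have hlk : l < k := Finset.mem_range.1 hl
      apply aux_isBigO_tendsto_zero ?_ hlk
      have h2 : (fun m => ((n m).choose l : ℝ) * ((A - 1) ^ l).coeff (2 * k))
          =O[atTop] (fun m : ℕ => (m:ℝ) ^ l * 1) :=
        (aux_choose_isBigO hn l).mul (isBigO_const_const _ one_ne_zero _)
      simpa using h2
    have := hrest.add hmain
    rw [zero_add] at this
    exact this
lemma aux_sum_even (jj : ℕ) (f : ℕ → ℝ) (hodd : ∀ a, ¬ Even a → f a = 0) :
    ∑ a ∈ Finset.range (2 * jj + 1), f a = ∑ p ∈ Finset.range (jj + 1), f (2 * p) := by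
  have himg : ∑ p ∈ Finset.range (jj + 1), f (2 * p)
      = ∑ a ∈ (Finset.range (jj + 1)).image (fun p => 2 * p), f a :=
    (Finset.sum_image (by intro x _ y _ h; omega)).symm
  rw [himg]
  symm
  apply Finset.sum_subset
  · intro a ha
    simp only [Finset.mem_image, Finset.mem_range] at ha ⊢
    obtain ⟨p, hp, rfl⟩ := ha
    omega
  · intro a ha ha2
    apply hodd
    rintro ⟨q, hq⟩
    apply ha2
    simp only [Finset.mem_image, Finset.mem_range] at ha ⊢
    exact ⟨q, by omega, by omega⟩

lemma aux_binom (c d : ℝ) (k : ℕ) :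
    ∑ p ∈ Finset.range (k + 1), (c ^ p / p.factorial) * (d ^ (k - p) / (k - p).factorial)
      = (c + d) ^ k / k.factorial := by
  rw [add_pow, Finset.sum_div]
  apply Finset.sum_congr rfl
  intro p hp
  have hpk : p ≤ k := by simp only [Finset.mem_range] at hp; omega
  have hkey := Nat.choose_mul_factorial_mul_factorial hpk
  have hkey' : ((k.choose p : ℝ)) * (p.factorial : ℝ) * ((k - p).factorial : ℝ)
      = (k.factorial : ℝ) := by exact_mod_cast congrArg (Nat.cast (R := ℝ)) hkey
  have hfp : (p.factorial : ℝ) ≠ 0 := by positivity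
  have hfkp : ((k - p).factorial : ℝ) ≠ 0 := by positivity
  have hfk : (k.factorial : ℝ) ≠ 0 := by positivity
  field_simp
  rw [← hkey']
  ring

lemma G_mul {P Q : ℕ → Polynomial ℝ} {c d : ℝ} (hP : Gprop P c) (hQ : Gprop Q d) :
    Gprop (fun m => P m * Q m) (c + d) := by
  obtain ⟨hPO, hPT⟩ := hP
  obtain ⟨hQO, hQT⟩ := hQ
  constructor
  · intro i
    have heq : ∀ m, (P m * Q m).coeff i
        = ∑ ab ∈ Finset.HasAntidiagonal.antidiagonal i, (P m).coeff ab.1 * (Q m).coeff ab.2 :=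
      fun m => Polynomial.coeff_mul _ _ _
    simp only [heq]
    apply IsBigO.fun_sum
    rintro ⟨a, b⟩ hab
    rw [Finset.HasAntidiagonal.mem_antidiagonal] at hab
    have h2 := (hPO a).mul (hQO b)
    apply h2.trans
    have h3 : (fun m : ℕ => (m:ℝ) ^ (a/2) * (m:ℝ) ^ (b/2))
        = fun m : ℕ => (m:ℝ) ^ (a/2 + b/2) := by
      funext m; rw [pow_add]
    rw [h3]
    exact aux_pow_isBigO (by omega)
  · intro k
    have heq : ∀ m : ℕ, (P m * Q m).coeff (2 * k) / (m:ℝ) ^ k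
        = ∑ a ∈ Finset.range (2 * k + 1),
            (P m).coeff a * (Q m).coeff (2 * k - a) / (m:ℝ) ^ k := by
      intro m
      rw [Polynomial.coeff_mul, Finset.Nat.sum_antidiagonal_eq_sum_range_succ_mk,
        Finset.sum_div]
    simp only [heq]
    set L : ℕ → ℝ := fun a => if Even a
      then (c ^ (a / 2) / (a / 2).factorial) * (d ^ (k - a / 2) / (k - a / 2).factorial)
      else 0 with hL
    have hsum : ∑ a ∈ Finset.range (2 * k + 1), L a = (c + d) ^ k / k.factorial := by
      rw [aux_sum_even k L (fun a ha => by simp only [hL, if_neg ha])]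
      have hval : ∀ p, L (2 * p)
          = (c ^ p / p.factorial) * (d ^ (k - p) / (k - p).factorial) := by
        intro p
        have hev : Even (2 * p) := ⟨p, by omega⟩
        have hdiv : 2 * p / 2 = p := by omega
        simp only [hL, if_pos hev, hdiv]
      simp only [hval]
      exact aux_binom c d k
    rw [← hsum]
    apply tendsto_finset_sum
    intro a ha
    rw [Finset.mem_range] at ha
    rcases Nat.even_or_odd a with hev | hod
    · obtain ⟨p, hp⟩ := hev
      have hpk : p ≤ k := by omega
      have hLa : L a = (c ^ p / p.factorial) * (d ^ (k - p) / (k - p).factorial) := by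
        have hev : Even a := ⟨p, hp⟩
        have hdiv : a / 2 = p := by omega
        simp only [hL, hdiv]
        rw [if_pos hev]
      rw [hLa]
      have hprod := (hPT p).mul (hQT (k - p))
      apply Tendsto.congr' ?_ hprod
      filter_upwards [eventually_ge_atTop 1] with m hm
      have hm0 : (m:ℝ) ≠ 0 := by positivity
      have h2p : 2 * p = a := by omega
      have h2q : 2 * (k - p) = 2 * k - a := by omega
      rw [h2p, h2q, div_mul_div_comm, ← pow_add, show p + (k - p) = k by omega]
    · obtain ⟨p, hp⟩ := hod
      have hnev : ¬ Even a := by rw [Nat.even_iff]; omega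
      have hLa : L a = 0 := by simp only [hL, if_neg hnev]
      rw [hLa]
      have hO := (hPO a).mul (hQO (2 * k - a))
      rw [show (fun m : ℕ => (m:ℝ) ^ (a / 2) * (m:ℝ) ^ ((2 * k - a) / 2))
          = fun m : ℕ => (m:ℝ) ^ (a / 2 + (2 * k - a) / 2)
          from funext fun m => (pow_add _ _ _).symm] at hO
      rw [show a / 2 + (2 * k - a) / 2 = k - 1 by omega] at hO
      exact aux_isBigO_tendsto_zero hO (by omega)
lemma G_prod {nc : ℕ} (A : Fin nc → Polynomial ℝ) (γ : Fin nc → ℝ) (n : Fin nc → ℕ → ℕ)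
    (hA0 : ∀ t, (A t).coeff 0 = 1) (hA1 : ∀ t, (A t).coeff 1 = 0)
    (hn : ∀ t, Tendsto (fun m : ℕ => (n t m : ℝ) / m) atTop (nhds (γ t)))
    (S : Finset (Fin nc)) :
    Gprop (fun m => ∏ t ∈ S, A t ^ n t m) (∑ t ∈ S, γ t * (A t).coeff 2) := by
  induction S using Finset.induction with
  | empty => simpa using G_one
  | @insert a S ha ih =>
    have hfe : (fun m => ∏ t ∈ insert a S, A t ^ n t m)
        = fun m => A a ^ n a m * ∏ t ∈ S, A t ^ n t m :=
      funext fun m => Finset.prod_insert ha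
    rw [hfe, Finset.sum_insert ha]
    exact G_mul (G_base (A a) (hA0 a) (hA1 a) (γ a) (n a) (hn a)) ih

/-- Coefficient asymptotics: let `A^{(t)}(x) = 1 + ∑_{u = r_t}^{s_t} A_u^{(t)} x^u` be real
polynomials with nonnegative coefficients, `r_t ≥ 2`, and let `n_t(m)` be natural-number
sequences with `n_t(m)/m → γ_t ≥ 0`. Then
`Coef[∏_t (A^{(t)}(x))^{n_t(m)}, x^{2j}] / m^j → (1/j!) (∑_{t : r_t = 2} γ_t A_2^{(t)})^j`
as `m → ∞`. (For types with `r_t > 2` the coefficient of `x^2` vanishes, so restricting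
the sum to `{t : r_t = 2}` is as stated.) -/
theorem stmt_1 (j nc : ℕ) (hj : 0 < j)
    (A : Fin nc → Polynomial ℝ) (r s : Fin nc → ℕ) (γ : Fin nc → ℝ)
    (hA0 : ∀ t, (A t).coeff 0 = 1)
    (hAnn : ∀ t u, 0 ≤ (A t).coeff u)
    (hr : ∀ t, 2 ≤ r t)
    (hrs : ∀ t, r t ≤ s t)
    (hdeg : ∀ t, (A t).natDegree ≤ s t)
    (hgap : ∀ t u, 0 < u → u < r t → (A t).coeff u = 0)
    (hγ : ∀ t, 0 ≤ γ t)
    (n : Fin nc → ℕ → ℕ)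
    (hn : ∀ t, Tendsto (fun m : ℕ => (n t m : ℝ) / (m : ℝ)) atTop (nhds (γ t))) :
    Tendsto (fun m : ℕ => (∏ t : Fin nc, A t ^ n t m).coeff (2 * j) / (m : ℝ) ^ j)
      atTop
      (nhds ((∑ t ∈ Finset.univ.filter (fun t : Fin nc => r t = 2),
          γ t * (A t).coeff 2) ^ j / (Nat.factorial j : ℝ))) := by
  have hA1 : ∀ t, (A t).coeff 1 = 0 := fun t =>
    hgap t 1 one_pos (by have := hr t; omega)
  have hsum : (∑ t ∈ Finset.univ.filter (fun t : Fin nc => r t = 2), γ t * (A t).coeff 2)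
      = ∑ t : Fin nc, γ t * (A t).coeff 2 := by
    apply Finset.sum_subset (Finset.filter_subset _ _)
    intro t _ ht
    have hne : r t ≠ 2 := by simpa using ht
    have h3 : (A t).coeff 2 = 0 := hgap t 2 two_pos (by have := hr t; omega)
    simp [h3]
  rw [hsum]
  exact (G_prod A γ n hA0 hA1 hn Finset.univ).2 j
end

section
/- In Ensemble 1 with block length N and vertical stacking parameter q ≥ 2, let A_d denote the number of vectors of Hamming weight d in the kernel of the block-diagonal matrix H_1 over GF(2). Then the expected number M(d) of weight-d codewords of a code drawn uniformly at random from the ensemble (i.e., with the q−1 column permutations Π_2,…,Π_q independent and uniform) equals M(d) = A_d^q / binom(N,d)^{q−1}. -/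
open Finset

variable {α : Type*} [Fintype α] [DecidableEq α]

omit [DecidableEq α] in
lemma hn_def (v : α → ZMod 2) : hammingNorm v = (univ.filter (fun x => v x ≠ 0)).card := rfl

lemma hn_comp (v : α → ZMod 2) (σ : Equiv.Perm α) : hammingNorm (v ∘ σ) = hammingNorm v := by
  rw [hn_def, hn_def]
  apply Finset.card_bij' (fun x _ => σ x) (fun y _ => σ.symm y) <;> simp

lemma exists_perm_comp (v w : α → ZMod 2) (h : hammingNorm v = hammingNorm w) :
    ∃ σ : Equiv.Perm α, v ∘ σ = w := by
  have hone : ∀ a : ZMod 2, a ≠ 0 ↔ a = 1 := by decide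
  have h1 : Fintype.card {x // w x ≠ 0} = Fintype.card {x // v x ≠ 0} := by
    simp only [Fintype.card_subtype]; exact h.symm
  have h2 : Fintype.card {x // ¬ (w x ≠ 0)} = Fintype.card {x // ¬ (v x ≠ 0)} := by
    rw [Fintype.card_subtype_compl (fun x => w x ≠ 0),
        Fintype.card_subtype_compl (fun x => v x ≠ 0), h1]
  let e := Fintype.equivOfCardEq h1
  let e' := Fintype.equivOfCardEq h2
  refine ⟨(Equiv.sumCompl (fun x => w x ≠ 0)).symm.trans
    ((e.sumCongr e').trans (Equiv.sumCompl (fun x => v x ≠ 0))), ?_⟩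
  funext x
  by_cases hx : w x ≠ 0
  · have hs : (Equiv.sumCompl fun x => w x ≠ 0).symm x = Sum.inl ⟨x, hx⟩ :=
      Equiv.sumCompl_symm_apply_of_pos (p := fun x => w x ≠ 0) hx
    simp only [Function.comp_apply, Equiv.trans_apply, hs, Equiv.sumCongr_apply, Sum.map_inl,
      Equiv.sumCompl_apply_inl]
    rw [(hone _).mp (e ⟨x, hx⟩).2, ((hone _).mp hx)]
  · have hs : (Equiv.sumCompl fun x => w x ≠ 0).symm x = Sum.inr ⟨x, hx⟩ :=
      Equiv.sumCompl_symm_apply_of_neg (p := fun x => w x ≠ 0) hx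
    simp only [Function.comp_apply, Equiv.trans_apply, hs, Equiv.sumCongr_apply, Sum.map_inr,
      Equiv.sumCompl_apply_inr]
    have h3 := (e' ⟨x, hx⟩).2
    push_neg at h3 hx
    rw [h3, hx]

set_option linter.unusedSectionVars false

noncomputable def stabCard (v : α → ZMod 2) : ℕ :=
  (univ.filter (fun σ : Equiv.Perm α => v ∘ σ = v)).card

lemma fiber_card (v w : α → ZMod 2) (h : hammingNorm v = hammingNorm w) :
    (univ.filter (fun σ : Equiv.Perm α => v ∘ σ = w)).card = stabCard w := by
  classical
  obtain ⟨σ₀, hσ₀⟩ := exists_perm_comp v w h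
  have hv : ∀ y, v (σ₀ y) = w y := fun y => congrFun hσ₀ y
  have hw : ∀ y, w (σ₀⁻¹ y) = v y := fun y => by
    rw [← hv (σ₀⁻¹ y), ← Equiv.Perm.mul_apply, mul_inv_cancel, Equiv.Perm.one_apply]
  rw [stabCard]
  apply Finset.card_bij' (fun σ _ => σ₀⁻¹ * σ) (fun τ _ => σ₀ * τ)
  · intro σ hσ
    simp only [mem_filter, mem_univ, true_and] at hσ ⊢
    funext x
    simp only [Function.comp_apply, Equiv.Perm.mul_apply, hw]
    exact congrFun hσ x
  · intro τ hτ
    simp only [mem_filter, mem_univ, true_and] at hτ ⊢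
    funext x
    simp only [Function.comp_apply, Equiv.Perm.mul_apply, hv]
    exact congrFun hτ x
  · intro σ _; group
  · intro τ _; group

lemma stab_const (v w : α → ZMod 2) (h : hammingNorm v = hammingNorm w) :
    stabCard v = stabCard w := by
  rw [← fiber_card v w h, stabCard]
  obtain ⟨σ₀, hσ₀⟩ := exists_perm_comp v w h
  have hw : ∀ y, w (σ₀⁻¹ y) = v y := fun y => by
    rw [← congrFun hσ₀ (σ₀⁻¹ y)]; simp
  apply Finset.card_bij' (fun τ _ => τ * σ₀) (fun ρ _ => ρ * σ₀⁻¹)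
  · intro τ hτ
    simp only [mem_filter, mem_univ, true_and] at hτ ⊢
    funext x
    simp only [Function.comp_apply, Equiv.Perm.mul_apply]
    rw [show v (τ (σ₀ x)) = (v ∘ τ) (σ₀ x) from rfl, hτ]
    exact congrFun hσ₀ x
  · intro ρ hρ
    simp only [mem_filter, mem_univ, true_and] at hρ ⊢
    funext x
    simp only [Function.comp_apply, Equiv.Perm.mul_apply]
    rw [show v (ρ (σ₀⁻¹ x)) = (v ∘ ρ) (σ₀⁻¹ x) from rfl, hρ]
    exact hw x
  · intro τ _; group
  · intro ρ _; group

lemma count_perm (c : α → ZMod 2) (Q : (α → ZMod 2) → Prop) [DecidablePred Q] :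
    (univ.filter (fun σ : Equiv.Perm α => Q (c ∘ σ))).card
      = ∑ w ∈ univ.filter (fun w : α → ZMod 2 => Q w ∧ hammingNorm w = hammingNorm c),
          stabCard w := by
  classical
  rw [Finset.card_eq_sum_card_fiberwise
    (f := fun σ : Equiv.Perm α => c ∘ σ)
    (t := univ.filter (fun w : α → ZMod 2 => Q w ∧ hammingNorm w = hammingNorm c))
    (fun σ hσ => by
      simp only [mem_coe, mem_filter, mem_univ, true_and] at hσ ⊢
      exact ⟨hσ, hn_comp c σ⟩)]
  apply Finset.sum_congr rfl
  intro w hw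
  simp only [mem_filter, mem_univ, true_and] at hw
  rw [Finset.filter_filter, ← fiber_card c w hw.2.symm]
  congr 1
  apply Finset.filter_congr
  intro σ _
  constructor
  · rintro ⟨-, h2⟩; exact h2
  · intro h2; exact ⟨h2 ▸ hw.1, h2⟩

lemma card_weight (d : ℕ) :
    (univ.filter (fun w : α → ZMod 2 => hammingNorm w = d)).card
      = (Fintype.card α).choose d := by
  classical
  rw [← Finset.card_univ (α := α), ← Finset.card_powersetCard d (univ : Finset α)]
  refine Finset.card_bij' (fun w _ => univ.filter (fun x => w x ≠ 0))
    (fun t _ => fun x => if x ∈ t then 1 else 0) ?_ ?_ ?_ ?_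
  · intro w hw
    simp only [mem_filter, mem_univ, true_and] at hw
    simp only [Finset.mem_powersetCard]
    exact ⟨Finset.subset_univ _, hw⟩
  · intro t ht
    simp only [Finset.mem_powersetCard] at ht
    rw [mem_filter]
    simp only [mem_filter, mem_univ, true_and, hn_def]
    rw [← ht.2]
    congr 1
    ext x
    simp only [mem_filter, mem_univ, true_and]
    by_cases hx : x ∈ t <;> simp [hx]
  · intro w hw
    funext x
    by_cases hx : w x ≠ 0
    · have h1 : ∀ a : ZMod 2, a ≠ 0 → a = 1 := by decide
      simp only [mem_filter, mem_univ, true_and]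
      rw [if_pos hx]
      exact (h1 _ hx).symm
    · push_neg at hx
      simp [hx]
  · intro t ht
    ext x
    simp only [mem_filter, mem_univ, true_and]
    by_cases hx : x ∈ t <;> simp [hx]

lemma prod_count {n : ℕ} (P : Equiv.Perm α → Prop) [DecidablePred P] :
    (univ.filter (fun ω : Fin n → Equiv.Perm α => ∀ ℓ, P (ω ℓ))).card
      = (univ.filter P).card ^ n := by
  classical
  have : (univ.filter (fun ω : Fin n → Equiv.Perm α => ∀ ℓ, P (ω ℓ)))
      = Fintype.piFinset (fun _ : Fin n => univ.filter P) := by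
    ext ω
    simp [Fintype.mem_piFinset]
  rw [this, Fintype.card_piFinset]
  simp

lemma stab_mul_choose (c : α → ZMod 2) (d : ℕ) (hc : hammingNorm c = d) :
    stabCard c * (Fintype.card α).choose d = (Fintype.card α).factorial := by
  classical
  have h := count_perm c (fun _ => True)
  simp only [Finset.filter_true, true_and] at h
  rw [Finset.card_univ, Fintype.card_perm] at h
  rw [h]
  have hrw : ∑ w ∈ univ.filter
      (fun w : α → ZMod 2 => hammingNorm w = hammingNorm c), stabCard w
      = ∑ w ∈ univ.filter (fun w : α → ZMod 2 => hammingNorm w = hammingNorm c),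
          stabCard c := by
    refine Finset.sum_congr rfl (fun w hw => ?_)
    simp only [mem_filter, mem_univ, true_and] at hw
    exact stab_const w c hw
  rw [hrw, Finset.sum_const, smul_eq_mul, hc, card_weight d, mul_comm]

lemma n_c_eq (c : α → ZMod 2) (K : (α → ZMod 2) → Prop) [DecidablePred K] (d : ℕ)
    (hc : hammingNorm c = d) :
    (univ.filter (fun σ : Equiv.Perm α => K (c ∘ σ))).card
      = (univ.filter (fun v : α → ZMod 2 => K v ∧ hammingNorm v = d)).card * stabCard c := by
  classical
  rw [count_perm c K, hc]
  have hrw : ∑ w ∈ univ.filter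
      (fun w : α → ZMod 2 => K w ∧ hammingNorm w = d), stabCard w
      = ∑ w ∈ univ.filter (fun w : α → ZMod 2 => K w ∧ hammingNorm w = d), stabCard c := by
    refine Finset.sum_congr rfl (fun w hw => ?_)
    simp only [mem_filter, mem_univ, true_and] at hw
    exact stab_const w c (hw.2.trans hc.symm)
  rw [hrw, Finset.sum_const, smul_eq_mul]

lemma key_nat (n : ℕ) (K : (α → ZMod 2) → Prop) [DecidablePred K] (d : ℕ) :
    (∑ ω : Fin n → Equiv.Perm α,
        (univ.filter (fun c : α → ZMod 2 =>
          hammingNorm c = d ∧ K c ∧ ∀ ℓ, K (c ∘ ω ℓ))).card)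
      * ((Fintype.card α).choose d) ^ n
    = (univ.filter (fun v : α → ZMod 2 => K v ∧ hammingNorm v = d)).card ^ (n + 1)
      * (Fintype.card α).factorial ^ n := by
  classical
  set A := (univ.filter (fun v : α → ZMod 2 => K v ∧ hammingNorm v = d)).card with hA
  have step1 : (∑ ω : Fin n → Equiv.Perm α,
      (univ.filter (fun c : α → ZMod 2 =>
        hammingNorm c = d ∧ K c ∧ ∀ ℓ, K (c ∘ ω ℓ))).card)
    = ∑ c ∈ univ.filter (fun c : α → ZMod 2 => hammingNorm c = d ∧ K c),
        ((univ.filter (fun σ : Equiv.Perm α => K (c ∘ σ))).card) ^ n := by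
    simp only [Finset.card_filter]
    rw [Finset.sum_comm]
    rw [Finset.sum_filter]
    apply Finset.sum_congr rfl
    intro c _
    by_cases hc : hammingNorm c = d ∧ K c
    · simp only [hc, if_true, hc.1, hc.2, true_and]
      rw [← Finset.card_filter, prod_count (fun σ => K (c ∘ σ)), Finset.card_filter]
    · rw [if_neg hc]
      apply Finset.sum_eq_zero
      intro ω _
      rw [if_neg]
      tauto
  rw [step1, Finset.sum_mul]
  have step2 : ∀ c ∈ univ.filter (fun c : α → ZMod 2 => hammingNorm c = d ∧ K c),
      ((univ.filter (fun σ : Equiv.Perm α => K (c ∘ σ))).card) ^ n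
        * ((Fintype.card α).choose d) ^ n
      = A ^ n * (Fintype.card α).factorial ^ n := by
    intro c hc
    simp only [mem_filter, mem_univ, true_and] at hc
    rw [n_c_eq c K d hc.1, ← hA, mul_pow, mul_assoc, ← mul_pow,
      stab_mul_choose c d hc.1]
  rw [Finset.sum_congr rfl step2, Finset.sum_const, smul_eq_mul]
  have hcard : (univ.filter (fun c : α → ZMod 2 => hammingNorm c = d ∧ K c)).card = A := by
    rw [hA]; congr 1; ext c; simp [and_comm]
  rw [hcard, ← mul_assoc, ← pow_succ']

lemma key_real (q : ℕ) (hq : 2 ≤ q) (K : (α → ZMod 2) → Prop) [DecidablePred K] (d : ℕ) :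
    (∑ ω : Fin (q - 1) → Equiv.Perm α,
        ((univ.filter (fun c : α → ZMod 2 =>
          hammingNorm c = d ∧ K c ∧ ∀ ℓ, K (c ∘ ω ℓ))).card : ℝ))
      / (Fintype.card (Fin (q - 1) → Equiv.Perm α) : ℝ)
    = ((univ.filter (fun v : α → ZMod 2 => K v ∧ hammingNorm v = d)).card : ℝ) ^ q
      / (((Fintype.card α).choose d : ℝ)) ^ (q - 1) := by
  classical
  have hKey := key_nat (α := α) (q - 1) K d
  set N := Fintype.card α with hN
  set A := (univ.filter (fun v : α → ZMod 2 => K v ∧ hammingNorm v = d)).card with hAA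
  set T := ∑ ω : Fin (q - 1) → Equiv.Perm α,
    (univ.filter (fun c : α → ZMod 2 =>
      hammingNorm c = d ∧ K c ∧ ∀ ℓ, K (c ∘ ω ℓ))).card with hT
  have hden : Fintype.card (Fin (q - 1) → Equiv.Perm α) = N.factorial ^ (q - 1) := by
    rw [Fintype.card_fun, Fintype.card_perm, Fintype.card_fin]
  rw [← Nat.cast_sum, ← hT, hden]
  clear_value N A T
  by_cases hd : d ≤ N
  · have hC : 0 < N.choose d := Nat.choose_pos hd
    have hF : 0 < N.factorial := Nat.factorial_pos N
    rw [div_eq_div_iff (by positivity) (by positivity)]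
    have hq1 : q - 1 + 1 = q := Nat.sub_add_cancel (show 1 ≤ q by linarith)
    rw [hq1] at hKey
    exact_mod_cast congrArg (fun x : ℕ => (x : ℝ)) hKey
  · push_neg at hd
    have hzero : ∀ w : α → ZMod 2, hammingNorm w ≠ d := by
      intro w hw
      have : hammingNorm w ≤ N := by
        rw [hn_def, hN]
        exact (Finset.card_filter_le _ _).trans (le_of_eq (Finset.card_univ))
      exact absurd (hw ▸ this) (not_le.mpr hd)
    have hT0 : T = 0 := by
      rw [hT]
      apply Finset.sum_eq_zero
      intro ω _
      rw [Finset.card_eq_zero, Finset.filter_eq_empty_iff]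
      intro c _ hc
      exact hzero c hc.1
    have hA0 : A = 0 := by
      rw [hAA, Finset.card_eq_zero, Finset.filter_eq_empty_iff]
      intro v _ hv
      exact hzero v hv.2
    rw [hT0, hA0]
    simp [zero_pow (show q ≠ 0 by linarith)]

/-- In Ensemble 1 with block-diagonal matrix `H₁` (diagonal blocks `H̄_1, …, H̄_B`,
`N` columns) and stacking parameter `q ≥ 2`, the expected number `M(d)` of weight-`d`
codewords — the average, over the `q−1` independent uniform column permutations
`Π_2, …, Π_q`, of the number of weight-`d` vectors in the kernel of the stacked
matrix — equals `A_d^q / C(N,d)^{q−1}`, where `A_d` is the number of weight-`d`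
vectors in the kernel of `H₁`. -/
theorem stmt_4 (q B : ℕ) (hq : 2 ≤ q) (s mr : Fin B → ℕ)
    (Hbar : ∀ i : Fin B, Matrix (Fin (mr i)) (Fin (s i)) (ZMod 2)) (d : ℕ) :
    (∑ ω : Fin (q - 1) → Equiv.Perm (Σ i : Fin B, Fin (s i)),
        ((Finset.univ.filter (fun c : (Σ i : Fin B, Fin (s i)) → ZMod 2 =>
            hammingNorm c = d ∧
            Matrix.mulVec (Matrix.blockDiagonal' Hbar) c = 0 ∧
            ∀ ℓ : Fin (q - 1),
              Matrix.mulVec (Matrix.blockDiagonal' Hbar) (fun x => c (ω ℓ x)) = 0)).card : ℝ))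
        / (Fintype.card (Fin (q - 1) → Equiv.Perm (Σ i : Fin B, Fin (s i))) : ℝ)
      = ((Finset.univ.filter (fun v : (Σ i : Fin B, Fin (s i)) → ZMod 2 =>
            Matrix.mulVec (Matrix.blockDiagonal' Hbar) v = 0 ∧ hammingNorm v = d)).card : ℝ) ^ q
          / (Nat.choose (Fintype.card (Σ i : Fin B, Fin (s i))) d : ℝ) ^ (q - 1) := by
  classical
  have h := key_real (α := Σ i : Fin B, Fin (s i)) q hq
    (fun v => Matrix.mulVec (Matrix.blockDiagonal' Hbar) v = 0) d
  have hnum : (∑ ω : Fin (q - 1) → Equiv.Perm (Σ i : Fin B, Fin (s i)),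
      ((Finset.univ.filter (fun c : (Σ i : Fin B, Fin (s i)) → ZMod 2 =>
          hammingNorm c = d ∧
          Matrix.mulVec (Matrix.blockDiagonal' Hbar) c = 0 ∧
          ∀ ℓ : Fin (q - 1),
            Matrix.mulVec (Matrix.blockDiagonal' Hbar) (fun x => c (ω ℓ x)) = 0)).card : ℝ))
      = ∑ ω : Fin (q - 1) → Equiv.Perm (Σ i : Fin B, Fin (s i)),
        ((univ.filter (fun c : (Σ i : Fin B, Fin (s i)) → ZMod 2 =>
          hammingNorm c = d ∧
          (fun v => Matrix.mulVec (Matrix.blockDiagonal' Hbar) v = 0) c ∧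
          ∀ ℓ, (fun v => Matrix.mulVec (Matrix.blockDiagonal' Hbar) v = 0) (c ∘ ω ℓ))).card
          : ℝ) := by
    apply Finset.sum_congr rfl
    intro ω _
    norm_cast
  have hA : (Finset.univ.filter (fun v : (Σ i : Fin B, Fin (s i)) → ZMod 2 =>
      Matrix.mulVec (Matrix.blockDiagonal' Hbar) v = 0 ∧ hammingNorm v = d)).card
      = (univ.filter (fun v : (Σ i : Fin B, Fin (s i)) → ZMod 2 =>
        (fun v => Matrix.mulVec (Matrix.blockDiagonal' Hbar) v = 0) v
          ∧ hammingNorm v = d)).card := by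
    congr 1
  rw [hnum, hA]
  exact h
end

section
/- In Ensemble 1 with block length N, stacking parameter q ≥ 2, and, for each check-node type t ∈ I_c, n_t diagonal copies of H̄_t in H_1 (weight enumerators A^{(t)}(z)), the expected number M(d) of weight-d codewords of a random code from the ensemble satisfies, for every real z > 0 and every 1 ≤ d ≤ N, M(d) ≤ binom(N,d)^{−(q−1)} · exp( q·[ ∑_{t∈I_c} n_t · log A^{(t)}(z) − d·log z ] ). Equivalently, with m = q·∑_t n_t check nodes and n_t = γ_t m/q, M(d) ≤ binom(N,d)^{−(q−1)} exp( m ∑_t γ_t log A^{(t)}(z) − q d log z ). -/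
/-- The set of codewords of the binary linear code with parity-check matrix `H`. -/
def localCode {mr n : ℕ} (H : Matrix (Fin mr) (Fin n) (ZMod 2)) :
    Finset (Fin n → ZMod 2) :=
  Finset.univ.filter (fun v => Matrix.mulVec H v = 0)

/-- The weight enumerating function of the code with parity-check matrix `H`,
evaluated at a real number `z`: `A(z) = ∑_{v ∈ C} z^{wt(v)}`. -/
noncomputable def wefEval {mr n : ℕ} (H : Matrix (Fin mr) (Fin n) (ZMod 2)) (z : ℝ) : ℝ :=
  ∑ v ∈ localCode H, z ^ hammingNorm v

open Finset

variable {α : Type*} [Fintype α] [DecidableEq α]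

lemma hn_comp_perm (c : α → ZMod 2) (σ : Equiv.Perm α) :
    hammingNorm (fun x => c (σ x)) = hammingNorm c := by
  unfold hammingNorm
  apply Finset.card_bij (fun x _ => σ x)
  · intro a ha; simp_all
  · intro a ha b hb h; exact σ.injective h
  · intro b hb; exact ⟨σ.symm b, by simp_all, by simp⟩

lemma card_stab_le (c : α → ZMod 2) :
    (univ.filter (fun σ : Equiv.Perm α => ∀ x, c (σ x) = c x)).card ≤
      (hammingNorm c).factorial * (Fintype.card α - hammingNorm c).factorial := by
  classical
  have h1 : Fintype.card {x // c x ≠ 0} = hammingNorm c := by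
    rw [Fintype.card_subtype]; rfl
  have h2 : Fintype.card {x // ¬ c x ≠ 0} = Fintype.card α - hammingNorm c := by
    rw [Fintype.card_subtype_compl, h1]
  have := Finset.card_le_card_of_injOn
    (f := fun σ : Equiv.Perm α =>
      if h : ∀ x, c (σ x) = c x then
        ((σ.subtypePerm (p := fun x => c x ≠ 0) (fun x => by simp only [h x]),
          σ.subtypePerm (p := fun x => ¬ c x ≠ 0) (fun x => by simp only [h x])) :
          Equiv.Perm {x // c x ≠ 0} × Equiv.Perm {x // ¬ c x ≠ 0})
      else 1)
    (s := univ.filter (fun σ : Equiv.Perm α => ∀ x, c (σ x) = c x))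
    (t := univ)
    (by intro σ hσ; exact mem_univ _)
    (by
      intro σ hσ τ hτ hst
      have hσ' : ∀ x, c (σ x) = c x := (mem_filter.mp hσ).2
      have hτ' : ∀ x, c (τ x) = c x := (mem_filter.mp hτ).2
      simp only [] at hst
      rw [dif_pos hσ', dif_pos hτ'] at hst
      ext x
      by_cases hx : c x ≠ 0
      · exact congrArg (fun e => (e.1 ⟨x, hx⟩ : {x // c x ≠ 0}).val) hst
      · exact congrArg (fun e => (e.2 ⟨x, hx⟩ : {x // ¬ c x ≠ 0}).val) hst)
  calc (univ.filter (fun σ : Equiv.Perm α => ∀ x, c (σ x) = c x)).card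
      ≤ (univ : Finset (Equiv.Perm {x // c x ≠ 0} × Equiv.Perm {x // ¬ c x ≠ 0})).card := this
    _ = (hammingNorm c).factorial * (Fintype.card α - hammingNorm c).factorial := by
        rw [Finset.card_univ, Fintype.card_prod, Fintype.card_perm, Fintype.card_perm, h1, h2]

lemma card_coset_le (c v : α → ZMod 2) :
    (univ.filter (fun σ : Equiv.Perm α => (fun x => c (σ x)) = v)).card ≤
      (hammingNorm c).factorial * (Fintype.card α - hammingNorm c).factorial := by
  classical
  rcases (univ.filter (fun σ : Equiv.Perm α => (fun x => c (σ x)) = v)).eq_empty_or_nonempty with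
    he | ⟨σ₀, hσ₀⟩
  · rw [he]; simp
  · simp only [mem_filter, mem_univ, true_and] at hσ₀
    refine le_trans ?_ (card_stab_le c)
    apply Finset.card_le_card_of_injOn (f := fun σ => σ * σ₀⁻¹)
    · intro σ hσ
      simp only [Finset.mem_coe, mem_filter, mem_univ, true_and] at hσ ⊢
      intro x
      have h1 : c (σ (σ₀⁻¹ x)) = v (σ₀⁻¹ x) := congrFun hσ (σ₀⁻¹ x)
      have h2 : c (σ₀ (σ₀⁻¹ x)) = v (σ₀⁻¹ x) := congrFun hσ₀ (σ₀⁻¹ x)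
      simpa using h1.trans (h2.symm.trans (by simp))
    · intro σ _ τ _ h
      exact mul_right_cancel h

lemma card_good_le {β : Type*} [Fintype β] [DecidableEq β] (H : Matrix β α (ZMod 2))
    (c : α → ZMod 2) (d : ℕ) (hc : hammingNorm c = d) :
    (univ.filter (fun σ : Equiv.Perm α => H.mulVec (fun x => c (σ x)) = 0)).card ≤
      (univ.filter (fun v : α → ZMod 2 => hammingNorm v = d ∧ H.mulVec v = 0)).card *
        (d.factorial * (Fintype.card α - d).factorial) := by
  classical
  have hset : univ.filter (fun σ : Equiv.Perm α => H.mulVec (fun x => c (σ x)) = 0) ⊆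
      (univ.filter (fun v : α → ZMod 2 => hammingNorm v = d ∧ H.mulVec v = 0)).biUnion
        (fun v => univ.filter (fun σ : Equiv.Perm α => (fun x => c (σ x)) = v)) := by
    intro σ h
    simp only [mem_filter, mem_univ, true_and] at h
    simp only [mem_biUnion, mem_filter, mem_univ, true_and]
    exact ⟨fun x => c (σ x), ⟨by rw [hn_comp_perm c σ, hc], h⟩, rfl⟩
  refine le_trans (Finset.card_le_card hset) ?_
  refine le_trans Finset.card_biUnion_le ?_
  rw [← smul_eq_mul, ← Finset.sum_const]
  apply Finset.sum_le_sum
  intro v hv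
  have := card_coset_le c v
  rwa [hc] at this

lemma mulVec_blockDiagonal' {T : ℕ} {s mr n : Fin T → ℕ}
    (Hbar : ∀ t : Fin T, Matrix (Fin (mr t)) (Fin (s t)) (ZMod 2))
    (c : (Σ p : (Σ t : Fin T, Fin (n t)), Fin (s p.1)) → ZMod 2)
    (p : Σ t : Fin T, Fin (n t)) (i : Fin (mr p.1)) :
    Matrix.mulVec (Matrix.blockDiagonal' (fun p : Σ t : Fin T, Fin (n t) => Hbar p.1)) c ⟨p, i⟩
      = Matrix.mulVec (Hbar p.1) (fun j => c ⟨p, j⟩) i := by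
  classical
  rw [Matrix.mulVec, dotProduct]
  rw [Matrix.mulVec, dotProduct]
  rw [← Finset.univ_sigma_univ, Finset.sum_sigma]
  rw [Finset.sum_eq_single p]
  · apply Finset.sum_congr rfl
    intro j _
    rw [Matrix.blockDiagonal'_apply_eq]
  · intro p' _ hp'
    apply Finset.sum_eq_zero
    intro j _
    rw [Matrix.blockDiagonal'_apply_ne _ _ _ hp'.symm, zero_mul]
  · intro h; exact absurd (mem_univ p) h

lemma hn_sigma {κ : Type*} [Fintype κ] {f : κ → Type*} [∀ k, Fintype (f k)]
    [∀ k, DecidableEq (f k)] [DecidableEq κ] (c : (Σ k, f k) → ZMod 2) :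
    hammingNorm c = ∑ k : κ, hammingNorm (fun j => c ⟨k, j⟩) := by
  classical
  unfold hammingNorm
  simp only [Finset.card_filter]
  rw [← Finset.univ_sigma_univ, Finset.sum_sigma]

lemma wef_block {T : ℕ} {s mr n : Fin T → ℕ}
    (Hbar : ∀ t : Fin T, Matrix (Fin (mr t)) (Fin (s t)) (ZMod 2)) (z : ℝ) :
    (∑ c : (Σ p : (Σ t : Fin T, Fin (n t)), Fin (s p.1)) → ZMod 2,
        if Matrix.mulVec (Matrix.blockDiagonal' (fun p : Σ t : Fin T, Fin (n t) => Hbar p.1)) c = 0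
        then z ^ hammingNorm c else 0)
      = ∏ p : Σ t : Fin T, Fin (n t), wefEval (Hbar p.1) z := by
  classical
  have hwef : ∀ p : Σ t : Fin T, Fin (n t), wefEval (Hbar p.1) z =
      ∑ w : Fin (s p.1) → ZMod 2, (if Matrix.mulVec (Hbar p.1) w = 0 then z ^ hammingNorm w else 0) := by
    intro p
    rw [wefEval, localCode, Finset.sum_filter]
  simp_rw [hwef]
  rw [Fintype.prod_sum]
  apply Fintype.sum_equiv (Equiv.piCurry (fun (a : Σ t : Fin T, Fin (n t)) (_ : Fin (s a.1)) => ZMod 2))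
  intro c
  set x := (Equiv.piCurry (fun (a : Σ t : Fin T, Fin (n t)) (_ : Fin (s a.1)) => ZMod 2)) c with hxdef
  have hx : ∀ p : Σ t : Fin T, Fin (n t),
      (fun j => c ⟨p, j⟩) = x p := fun p => rfl
  show (if Matrix.mulVec _ c = 0 then z ^ hammingNorm c else 0) = ∏ p : Σ t : Fin T, Fin (n t), _
  by_cases hall : ∀ p : Σ t : Fin T, Fin (n t), Matrix.mulVec (Hbar p.1) (x p) = 0
  · rw [if_pos]
    · rw [hn_sigma, ← Finset.prod_pow_eq_pow_sum]
      apply Finset.prod_congr rfl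
      intro p _
      rw [if_pos (hall p), hx]
    · funext y
      rcases y with ⟨p, i⟩
      rw [Pi.zero_apply, mulVec_blockDiagonal' Hbar c p i, hx, hall p]
      rfl
  · rw [if_neg]
    · push_neg at hall
      obtain ⟨p₀, hp₀⟩ := hall
      symm
      apply Finset.prod_eq_zero (mem_univ p₀)
      rw [if_neg hp₀]
    · intro hcontra
      apply hall
      intro p
      funext i
      rw [← hx p, show (Hbar p.1).mulVec (fun j => c ⟨p, j⟩) i = _ from (mulVec_blockDiagonal' Hbar c p i).symm, hcontra]
      rfl

lemma ensemble_bound {β : Type*} [Fintype β] [DecidableEq β] (H : Matrix β α (ZMod 2))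
    (k d : ℕ) (hdN : d ≤ Fintype.card α) :
    (∑ ω : Fin k → Equiv.Perm α,
        ((univ.filter (fun c : α → ZMod 2 => hammingNorm c = d ∧ H.mulVec c = 0 ∧
            ∀ ℓ : Fin k, H.mulVec (fun x => c (ω ℓ x)) = 0)).card : ℝ))
      / (Fintype.card (Fin k → Equiv.Perm α) : ℝ)
    ≤ ((univ.filter (fun v : α → ZMod 2 => hammingNorm v = d ∧ H.mulVec v = 0)).card : ℝ) *
      (((univ.filter (fun v : α → ZMod 2 => hammingNorm v = d ∧ H.mulVec v = 0)).card : ℝ) /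
        ((Fintype.card α).choose d : ℝ)) ^ k := by
  classical
  set N := Fintype.card α with hN
  set K := univ.filter (fun v : α → ZMod 2 => hammingNorm v = d ∧ H.mulVec v = 0) with hK
  set Ad := (K.card : ℝ) with hAd
  have hAd0 : 0 ≤ Ad := Nat.cast_nonneg _
  have hNfac : (0:ℝ) < (N.factorial : ℝ) := by exact_mod_cast N.factorial_pos
  have hChoose : (0:ℝ) < (N.choose d : ℝ) := by exact_mod_cast Nat.choose_pos hdN
  have hcardΩ : (Fintype.card (Fin k → Equiv.Perm α) : ℝ) = ((N.factorial : ℝ)) ^ k := by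
    rw [Fintype.card_fun, Fintype.card_perm, Fintype.card_fin]
    push_cast; rfl
  -- rewrite inner card as sum over K
  have hcard : ∀ ω : Fin k → Equiv.Perm α,
      ((univ.filter (fun c : α → ZMod 2 => hammingNorm c = d ∧ H.mulVec c = 0 ∧
          ∀ ℓ : Fin k, H.mulVec (fun x => c (ω ℓ x)) = 0)).card : ℝ)
        = ∑ c ∈ K, ∏ ℓ : Fin k,
            (if H.mulVec (fun x => c (ω ℓ x)) = 0 then (1:ℝ) else 0) := by
    intro ω
    have : univ.filter (fun c : α → ZMod 2 => hammingNorm c = d ∧ H.mulVec c = 0 ∧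
          ∀ ℓ : Fin k, H.mulVec (fun x => c (ω ℓ x)) = 0)
        = K.filter (fun c => ∀ ℓ : Fin k, H.mulVec (fun x => c (ω ℓ x)) = 0) := by
      rw [hK, Finset.filter_filter]
      apply Finset.filter_congr
      intro c _
      tauto
    rw [this, Finset.card_filter]
    push_cast
    apply Finset.sum_congr rfl
    intro c _
    rw [Finset.prod_boole]
    simp
  simp_rw [hcard]
  rw [Finset.sum_comm]
  -- bound each c-term
  have hterm : ∀ c ∈ K,
      (∑ ω : Fin k → Equiv.Perm α, ∏ ℓ : Fin k,
          (if H.mulVec (fun x => c (ω ℓ x)) = 0 then (1:ℝ) else 0))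
        ≤ (Ad * (d.factorial * (N - d).factorial)) ^ k := by
    intro c hc
    have hcd : hammingNorm c = d := (Finset.mem_filter.mp hc).2.1
    have hswap : (∑ ω : Fin k → Equiv.Perm α, ∏ ℓ : Fin k,
          (if H.mulVec (fun x => c (ω ℓ x)) = 0 then (1:ℝ) else 0))
        = (∑ σ : Equiv.Perm α, if H.mulVec (fun x => c (σ x)) = 0 then (1:ℝ) else 0) ^ k := by
      rw [Fintype.sum_pow]
    rw [hswap]
    have hsum : (∑ σ : Equiv.Perm α, if H.mulVec (fun x => c (σ x)) = 0 then (1:ℝ) else 0)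
        = ((univ.filter (fun σ : Equiv.Perm α => H.mulVec (fun x => c (σ x)) = 0)).card : ℝ) := by
      rw [Finset.card_filter]; push_cast; rfl
    have hb := card_good_le H c d hcd
    apply pow_le_pow_left₀
    · rw [hsum]; exact Nat.cast_nonneg _
    · rw [hsum]
      calc ((univ.filter (fun σ : Equiv.Perm α => H.mulVec (fun x => c (σ x)) = 0)).card : ℝ)
          ≤ ((K.card * (d.factorial * (N - d).factorial) : ℕ) : ℝ) := by exact_mod_cast hb
        _ = Ad * (d.factorial * (N - d).factorial) := by push_cast; ring
  have hS : (∑ c ∈ K, ∑ ω : Fin k → Equiv.Perm α, ∏ ℓ : Fin k,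
        (if H.mulVec (fun x => c (ω ℓ x)) = 0 then (1:ℝ) else 0))
      ≤ Ad * (Ad * (d.factorial * (N - d).factorial)) ^ k := by
    calc (∑ c ∈ K, ∑ ω : Fin k → Equiv.Perm α, ∏ ℓ : Fin k,
          (if H.mulVec (fun x => c (ω ℓ x)) = 0 then (1:ℝ) else 0))
        ≤ ∑ _c ∈ K, (Ad * (d.factorial * (N - d).factorial)) ^ k :=
          Finset.sum_le_sum hterm
      _ = Ad * (Ad * (d.factorial * (N - d).factorial)) ^ k := by
          rw [Finset.sum_const, nsmul_eq_mul, hAd]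
  rw [hcardΩ, div_le_iff₀ (by positivity)]
  refine le_trans hS (le_of_eq ?_)
  have hfac : (N.choose d : ℝ) * (d.factorial * (N - d).factorial) = (N.factorial : ℝ) := by
    rw [← mul_assoc]
    exact_mod_cast congrArg (Nat.cast : ℕ → ℝ) (Nat.choose_mul_factorial_mul_factorial hdN)
  have : (Ad / (N.choose d : ℝ)) * (N.factorial : ℝ) = Ad * (d.factorial * (N - d).factorial) := by
    rw [← hfac]; field_simp
  rw [← this, mul_pow]
  ring

/-- In Ensemble 1 (block-diagonal `H₁` with `n_t` copies of `H̄_t` for each type `t`,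
stacked with `q − 1` independently and uniformly column-permuted copies of itself), the
expected number `M(d)` of weight-`d` codewords satisfies, for every real `z > 0` and
every `1 ≤ d ≤ N`,
`M(d) ≤ C(N,d)^{−(q−1)} · exp( q·(∑_t n_t log A^{(t)}(z) − d log z) )`. -/
theorem stmt_8 (q T : ℕ) (hq : 2 ≤ q) (s mr n : Fin T → ℕ)
    (Hbar : ∀ t : Fin T, Matrix (Fin (mr t)) (Fin (s t)) (ZMod 2))
    (d : ℕ) (hd : 1 ≤ d)
    (hdN : d ≤ Fintype.card (Σ p : (Σ t : Fin T, Fin (n t)), Fin (s p.1)))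
    (z : ℝ) (hz : 0 < z)
    (M : ℝ)
    (hM : M =
      (∑ ω : Fin (q - 1) → Equiv.Perm (Σ p : (Σ t : Fin T, Fin (n t)), Fin (s p.1)),
          ((Finset.univ.filter
              (fun c : (Σ p : (Σ t : Fin T, Fin (n t)), Fin (s p.1)) → ZMod 2 =>
                hammingNorm c = d ∧
                Matrix.mulVec
                    (Matrix.blockDiagonal' (fun p : Σ t : Fin T, Fin (n t) => Hbar p.1)) c
                  = 0 ∧
                ∀ ℓ : Fin (q - 1),
                  Matrix.mulVec
                      (Matrix.blockDiagonal' (fun p : Σ t : Fin T, Fin (n t) => Hbar p.1))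
                      (fun x => c (ω ℓ x)) = 0)).card : ℝ))
        / (Fintype.card
            (Fin (q - 1) → Equiv.Perm (Σ p : (Σ t : Fin T, Fin (n t)), Fin (s p.1))) : ℝ)) :
    M ≤ ((Nat.choose (Fintype.card (Σ p : (Σ t : Fin T, Fin (n t)), Fin (s p.1))) d : ℝ))⁻¹
          ^ (q - 1)
        * Real.exp ((q : ℝ) *
            ((∑ t : Fin T, (n t : ℝ) * Real.log (wefEval (Hbar t) z)) - d * Real.log z)) := by
  classical
  set H₁ := Matrix.blockDiagonal' (fun p : Σ t : Fin T, Fin (n t) => Hbar p.1) with hH₁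
  set N := Fintype.card (Σ p : (Σ t : Fin T, Fin (n t)), Fin (s p.1)) with hNdef
  set K := Finset.univ.filter
      (fun v : (Σ p : (Σ t : Fin T, Fin (n t)), Fin (s p.1)) → ZMod 2 =>
        hammingNorm v = d ∧ H₁.mulVec v = 0) with hKdef
  set Ad := (K.card : ℝ) with hAddef
  -- step 1: expectation bound
  have step1 : M ≤ Ad * (Ad / (N.choose d : ℝ)) ^ (q - 1) := by
    rw [hM]
    exact ensemble_bound H₁ (q - 1) d hdN
  -- positivity of wef
  have hwpos : ∀ t : Fin T, 0 < wefEval (Hbar t) z := by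
    intro t
    apply Finset.sum_pos
    · intro v _; positivity
    · exact ⟨0, by simp [localCode]⟩
  -- W = product of wefs
  set W := ∏ t : Fin T, wefEval (Hbar t) z ^ (n t) with hWdef
  have hWpos : 0 < W := by
    apply Finset.prod_pos; intro t _; exact pow_pos (hwpos t) _
  have hWsum : (∑ c : (Σ p : (Σ t : Fin T, Fin (n t)), Fin (s p.1)) → ZMod 2,
      if H₁.mulVec c = 0 then z ^ hammingNorm c else 0) = W := by
    rw [hH₁, wef_block Hbar z, hWdef]
    rw [← Finset.univ_sigma_univ, Finset.prod_sigma]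
    apply Finset.prod_congr rfl
    intro t _
    show ∏ _k : Fin (n t), wefEval (Hbar t) z = _
    rw [Finset.prod_const, Finset.card_univ, Fintype.card_fin]
  -- step 2: Ad ≤ W / z^d
  have step2 : Ad ≤ W / z ^ d := by
    rw [le_div_iff₀ (by positivity)]
    rw [← hWsum]
    have : Ad * z ^ d = ∑ c ∈ K, z ^ hammingNorm c := by
      rw [Finset.sum_congr rfl (fun c hc => by
        rw [(Finset.mem_filter.mp hc).2.1]), Finset.sum_const, hAddef, nsmul_eq_mul]
    rw [this]
    rw [← Finset.sum_filter]
    apply Finset.sum_le_sum_of_subset_of_nonneg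
    · intro c hc
      simp only [hKdef, Finset.mem_filter] at hc ⊢
      exact ⟨hc.1, hc.2.2⟩
    · intro c _ _; positivity
  -- assemble
  have hAd0 : 0 ≤ Ad := Nat.cast_nonneg _
  have hC : (0:ℝ) < (N.choose d : ℝ) := by exact_mod_cast Nat.choose_pos hdN
  have hq1 : q - 1 + 1 = q := by omega
  have key : M ≤ (W / z ^ d) ^ q * ((N.choose d : ℝ))⁻¹ ^ (q - 1) := by
    refine le_trans step1 ?_
    have h1 : Ad * (Ad / (N.choose d : ℝ)) ^ (q - 1)
        = Ad ^ q * ((N.choose d : ℝ))⁻¹ ^ (q - 1) := by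
      rw [div_pow, div_eq_mul_inv, ← inv_pow, ← mul_assoc, ← pow_succ', hq1]
    rw [h1]
    apply mul_le_mul_of_nonneg_right _ (by positivity)
    exact pow_le_pow_left₀ hAd0 step2 q
  have e1 : (∑ t : Fin T, (n t : ℝ) * Real.log (wefEval (Hbar t) z)) = Real.log W := by
    rw [hWdef, Real.log_prod (fun t _ => by exact ne_of_gt (pow_pos (hwpos t) _))]
    exact Finset.sum_congr rfl (fun t _ => (Real.log_pow _ _).symm)
  have e2 : (d : ℝ) * Real.log z = Real.log (z ^ d) := (Real.log_pow _ _).symm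
  have hlog : Real.exp ((q : ℝ) *
      ((∑ t : Fin T, (n t : ℝ) * Real.log (wefEval (Hbar t) z)) - (d : ℝ) * Real.log z))
      = (W / z ^ d) ^ q := by
    rw [e1, e2, ← Real.log_div (ne_of_gt hWpos) (by positivity), ← Real.log_pow,
      Real.exp_log (by positivity)]
  refine le_trans key (le_of_eq ?_)
  rw [hlog, mul_comm]
end
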